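/- For any nonzero real p×p matrix M: inc(M) ≤ ξ(T(M)) ≤ 2·inc(M). -/

import Mathlib

open Matrix MeasureTheory
open scoped Classical

noncomputable section

namespace LVGGM

variable {p h : ℕ}

/-- Spectral norm (largest singular value) of a real square matrix. -/
def specNorm (M : Matrix (Fin p) (Fin p) ℝ) : ℝ :=
  ‖Matrix.toEuclideanCLM (𝕜 := ℝ) M‖

/-- Entrywise max norm `‖M‖_∞`. -/
def maxNorm (M : Matrix (Fin p) (Fin p) ℝ) : ℝ :=
  ⨆ i, ⨆ j, |M i j|

/-- Entrywise ℓ₁ norm `‖M‖₁`. -/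
def l1Norm (M : Matrix (Fin p) (Fin p) ℝ) : ℝ :=
  ∑ i, ∑ j, |M i j|

/-- The matrix of the orthogonal projection of ℝ^p onto the column space of `M`. -/
def colProj (M : Matrix (Fin p) (Fin p) ℝ) : Matrix (Fin p) (Fin p) ℝ :=
  LinearMap.toMatrix (EuclideanSpace.basisFun (Fin p) ℝ).toBasis
    (EuclideanSpace.basisFun (Fin p) ℝ).toBasis
    ((LinearMap.range (Matrix.toEuclideanLin M)).subtype ∘ₗ
      ((LinearMap.range (Matrix.toEuclideanLin M)).orthogonalProjectionOnto).toLinearMap)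

/-- Singular values of a matrix, as square roots of eigenvalues of `Mᴴ M`. -/
def singVals (M : Matrix (Fin p) (Fin p) ℝ) (i : Fin p) : ℝ :=
  Real.sqrt ((Matrix.posSemidef_conjTranspose_mul_self M).1.eigenvalues i)

/-! ### Sparse tangent spaces -/

/-- Tangent space to the variety of sparse matrices at `M₀`. -/
def OmegaSet (M₀ : Matrix (Fin p) (Fin p) ℝ) : Set (Matrix (Fin p) (Fin p) ℝ) :=
  {N | ∀ i j, M₀ i j = 0 → N i j = 0}

/-- Orthogonal projection onto `OmegaSet M₀`. -/
def projOmega (M₀ N : Matrix (Fin p) (Fin p) ℝ) : Matrix (Fin p) (Fin p) ℝ :=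
  Matrix.of fun i j => if M₀ i j = 0 then 0 else N i j

/-- Orthogonal projection onto the orthogonal complement of `OmegaSet M₀`. -/
def projOmegaPerp (M₀ N : Matrix (Fin p) (Fin p) ℝ) : Matrix (Fin p) (Fin p) ℝ :=
  Matrix.of fun i j => if M₀ i j = 0 then N i j else 0

/-- `μ(Ω(M₀))`: max spectral norm over the `‖·‖_∞`-unit ball of `Ω(M₀)`. -/
def muOmega (M₀ : Matrix (Fin p) (Fin p) ℝ) : ℝ :=
  ⨆ N : {N : Matrix (Fin p) (Fin p) ℝ // N ∈ OmegaSet M₀ ∧ maxNorm N ≤ 1}, specNorm N.1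

/-! ### Low-rank tangent spaces (symmetric version) -/

/-- `𝒫_{T(M)}` for symmetric `M`: `N ↦ P N + N P − P N P` with `P` the column-space projector. -/
def projTsym (M N : Matrix (Fin p) (Fin p) ℝ) : Matrix (Fin p) (Fin p) ℝ :=
  colProj M * N + N * colProj M - colProj M * N * colProj M

/-- `𝒫_{T(M)^⊥}` for symmetric `M`: `N ↦ (I−P) N (I−P)`. -/
def projTsymPerp (M N : Matrix (Fin p) (Fin p) ℝ) : Matrix (Fin p) (Fin p) ℝ :=
  (1 - colProj M) * N * (1 - colProj M)

/-- Tangent space to the variety of symmetric low-rank matrices at symmetric `M`. -/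
def TsetSym (M : Matrix (Fin p) (Fin p) ℝ) : Set (Matrix (Fin p) (Fin p) ℝ) :=
  {N | N.IsHermitian ∧ projTsymPerp M N = 0}

/-- `ξ(T(M))` (symmetric version). -/
def xiT (M : Matrix (Fin p) (Fin p) ℝ) : ℝ :=
  ⨆ N : {N : Matrix (Fin p) (Fin p) ℝ // N ∈ TsetSym M ∧ specNorm N ≤ 1}, maxNorm N.1

/-- `ρ(T(M₁), T(M₂))` (symmetric version). -/
def rhoSym (M₁ M₂ : Matrix (Fin p) (Fin p) ℝ) : ℝ :=
  ⨆ N : {N : Matrix (Fin p) (Fin p) ℝ // specNorm N ≤ 1},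
    specNorm (projTsym M₁ N.1 - projTsym M₂ N.1)

/-! ### Low-rank tangent spaces (general version) -/

/-- `𝒫_{T(M)}` for general `M`: `N ↦ P_U N + N P_V − P_U N P_V`. -/
def projTgen (M N : Matrix (Fin p) (Fin p) ℝ) : Matrix (Fin p) (Fin p) ℝ :=
  colProj M * N + N * colProj Mᵀ - colProj M * N * colProj Mᵀ

/-- `𝒫_{T(M)^⊥}` for general `M`. -/
def projTgenPerp (M N : Matrix (Fin p) (Fin p) ℝ) : Matrix (Fin p) (Fin p) ℝ :=
  (1 - colProj M) * N * (1 - colProj Mᵀ)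

/-- Tangent space to the variety of low-rank matrices at a general matrix `M`. -/
def TsetGen (M : Matrix (Fin p) (Fin p) ℝ) : Set (Matrix (Fin p) (Fin p) ℝ) :=
  {N | projTgenPerp M N = 0}

/-- `ξ(T(M))` (general version). -/
def xiGen (M : Matrix (Fin p) (Fin p) ℝ) : ℝ :=
  ⨆ N : {N : Matrix (Fin p) (Fin p) ℝ // N ∈ TsetGen M ∧ specNorm N ≤ 1}, maxNorm N.1

/-- Euclidean norm of the `i`-th column of `P`, i.e. `‖P e_i‖`. -/
def colEucNorm (P : Matrix (Fin p) (Fin p) ℝ) (i : Fin p) : ℝ :=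
  Real.sqrt (∑ j, (P j i) ^ 2)

/-- Incoherence `inc(M)` of the row/column spaces of `M`. -/
def inc (M : Matrix (Fin p) (Fin p) ℝ) : ℝ :=
  max (⨆ i, colEucNorm (colProj M) i) (⨆ i, colEucNorm (colProj Mᵀ) i)

/-! ### Orthogonal projections onto arbitrary subspaces of matrices -/

/-- Matrices as vectors in the Euclidean space of entries (trace inner product). -/
def toELin : Matrix (Fin p) (Fin p) ℝ →ₗ[ℝ] EuclideanSpace ℝ (Fin p × Fin p) where
  toFun M := WithLp.toLp 2 (fun q : Fin p × Fin p => M q.1 q.2)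
  map_add' _ _ := rfl
  map_smul' _ _ := rfl

/-- Orthogonal projection (trace inner product) onto a subspace of matrices. -/
def matProj (T : Submodule ℝ (Matrix (Fin p) (Fin p) ℝ)) (N : Matrix (Fin p) (Fin p) ℝ) :
    Matrix (Fin p) (Fin p) ℝ :=
  Matrix.of fun i j => ((T.map toELin).orthogonalProjectionOnto (toELin N) : EuclideanSpace ℝ (Fin p × Fin p)) (i, j)

/-- `ρ(T₁,T₂)` for arbitrary subspaces of matrices. -/
def rhoSub (T₁ T₂ : Submodule ℝ (Matrix (Fin p) (Fin p) ℝ)) : ℝ :=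
  ⨆ N : {N : Matrix (Fin p) (Fin p) ℝ // specNorm N ≤ 1},
    specNorm (matProj T₁ N.1 - matProj T₂ N.1)

/-- `ξ(T)` for an arbitrary subspace of matrices. -/
def xiSub (T : Submodule ℝ (Matrix (Fin p) (Fin p) ℝ)) : ℝ :=
  ⨆ N : {N : Matrix (Fin p) (Fin p) ℝ // N ∈ T ∧ specNorm N ≤ 1}, maxNorm N.1

/-! ### The dual norm g_γ -/

/-- `g_γ(S,L) = max(‖S‖_∞/γ, ‖L‖₂)`. -/
def gNorm (γ : ℝ) (S L : Matrix (Fin p) (Fin p) ℝ) : ℝ :=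
  max (maxNorm S / γ) (specNorm L)

/-- `g_γ(𝒜†(M)) = max(‖M‖_∞/γ, ‖M‖₂)`. -/
def gA (γ : ℝ) (M : Matrix (Fin p) (Fin p) ℝ) : ℝ :=
  max (maxNorm M / γ) (specNorm M)

/-! ### Latent-variable Fisher information setup -/

/-- `S* = K*_O`. -/
def Sstar (K : Matrix (Fin p ⊕ Fin h) (Fin p ⊕ Fin h) ℝ) : Matrix (Fin p) (Fin p) ℝ :=
  K.toBlocks₁₁

/-- `L* = K*_{O,H} (K*_H)⁻¹ K*_{H,O}`. -/
def Lstar (K : Matrix (Fin p ⊕ Fin h) (Fin p ⊕ Fin h) ℝ) : Matrix (Fin p) (Fin p) ℝ :=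
  K.toBlocks₁₂ * (K.toBlocks₂₂)⁻¹ * K.toBlocks₂₁

/-- `K̃*_O = S* − L*` (Schur complement). -/
def KtildeO (K : Matrix (Fin p ⊕ Fin h) (Fin p ⊕ Fin h) ℝ) : Matrix (Fin p) (Fin p) ℝ :=
  Sstar K - Lstar K

/-- `Σ*_O = (K̃*_O)⁻¹`. -/
def SigmaO (K : Matrix (Fin p ⊕ Fin h) (Fin p ⊕ Fin h) ℝ) : Matrix (Fin p) (Fin p) ℝ :=
  (KtildeO K)⁻¹

/-- `ψ = ‖Σ*_O‖₂`. -/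
def psi (K : Matrix (Fin p ⊕ Fin h) (Fin p ⊕ Fin h) ℝ) : ℝ :=
  specNorm (SigmaO K)

/-- Fisher information operator `ℐ*(M) = Σ*_O M Σ*_O`. -/
def Istar (K : Matrix (Fin p ⊕ Fin h) (Fin p ⊕ Fin h) ℝ) (M : Matrix (Fin p) (Fin p) ℝ) :
    Matrix (Fin p) (Fin p) ℝ :=
  SigmaO K * M * SigmaO K

/-- A nearby tangent space: `T' = T(M')` for a symmetric `M'` with the same rank as `Lst`
and `ρ(T',T(Lst)) ≤ ξ(T(Lst))/2`. -/
def Nearby (Lst M' : Matrix (Fin p) (Fin p) ℝ) : Prop :=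
  M'.IsHermitian ∧ M'.rank = Lst.rank ∧ rhoSym M' Lst ≤ xiT Lst / 2

/-- `α_Ω`. -/
def alphaOmega (K : Matrix (Fin p ⊕ Fin h) (Fin p ⊕ Fin h) ℝ) : ℝ :=
  ⨅ M : {M : Matrix (Fin p) (Fin p) ℝ // M ∈ OmegaSet (Sstar K) ∧ maxNorm M = 1},
    maxNorm (projOmega (Sstar K) (Istar K (projOmega (Sstar K) M.1)))

/-- `δ_Ω`. -/
def deltaOmega (K : Matrix (Fin p ⊕ Fin h) (Fin p ⊕ Fin h) ℝ) : ℝ :=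
  ⨆ M : {M : Matrix (Fin p) (Fin p) ℝ // M ∈ OmegaSet (Sstar K) ∧ maxNorm M = 1},
    maxNorm (projOmegaPerp (Sstar K) (Istar K (projOmega (Sstar K) M.1)))

/-- `β_Ω`. -/
def betaOmega (K : Matrix (Fin p ⊕ Fin h) (Fin p ⊕ Fin h) ℝ) : ℝ :=
  ⨆ M : {M : Matrix (Fin p) (Fin p) ℝ // M ∈ OmegaSet (Sstar K) ∧ specNorm M = 1},
    specNorm (Istar K M.1)

/-- `α_T`. -/
def alphaTC (K : Matrix (Fin p ⊕ Fin h) (Fin p ⊕ Fin h) ℝ) : ℝ :=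
  ⨅ x : {x : Matrix (Fin p) (Fin p) ℝ × Matrix (Fin p) (Fin p) ℝ //
      Nearby (Lstar K) x.1 ∧ x.2 ∈ TsetSym x.1 ∧ specNorm x.2 = 1},
    specNorm (projTsym x.1.1 (Istar K (projTsym x.1.1 x.1.2)))

/-- `δ_T`. -/
def deltaTC (K : Matrix (Fin p ⊕ Fin h) (Fin p ⊕ Fin h) ℝ) : ℝ :=
  ⨆ x : {x : Matrix (Fin p) (Fin p) ℝ × Matrix (Fin p) (Fin p) ℝ //
      Nearby (Lstar K) x.1 ∧ x.2 ∈ TsetSym x.1 ∧ specNorm x.2 = 1},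
    specNorm (projTsymPerp x.1.1 (Istar K (projTsym x.1.1 x.1.2)))

/-- `β_T`. -/
def betaTC (K : Matrix (Fin p ⊕ Fin h) (Fin p ⊕ Fin h) ℝ) : ℝ :=
  ⨆ x : {x : Matrix (Fin p) (Fin p) ℝ × Matrix (Fin p) (Fin p) ℝ //
      Nearby (Lstar K) x.1 ∧ x.2 ∈ TsetSym x.1 ∧ maxNorm x.2 = 1},
    maxNorm (Istar K x.1.2)

/-- `α = min(α_Ω, α_T)`. -/
def alphaC (K : Matrix (Fin p ⊕ Fin h) (Fin p ⊕ Fin h) ℝ) : ℝ :=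
  min (alphaOmega K) (alphaTC K)

/-- `δ = max(δ_Ω, δ_T)`. -/
def deltaC (K : Matrix (Fin p ⊕ Fin h) (Fin p ⊕ Fin h) ℝ) : ℝ :=
  max (deltaOmega K) (deltaTC K)

/-- `β = max(β_Ω, β_T)`. -/
def betaC (K : Matrix (Fin p ⊕ Fin h) (Fin p ⊕ Fin h) ℝ) : ℝ :=
  max (betaOmega K) (betaTC K)

/-- The positive semidefinite square root of a positive semidefinite matrix
(the former `Matrix.PosSemidef.sqrt`, spelled out with its old definition). -/
def psdSqrt {n : Type*} [Fintype n] [DecidableEq n] {A : Matrix n n ℝ} (hA : A.PosSemidef) :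
    Matrix n n ℝ :=
  (hA.1.eigenvectorUnitary : Matrix n n ℝ) * diagonal ((↑) ∘ (√·) ∘ hA.1.eigenvalues) *
    (star hA.1.eigenvectorUnitary : Matrix n n ℝ)

/-! ### Probability: iid Gaussian samples and sample covariance -/

/-- The joint law of `n` i.i.d. samples from `N(0, S)` on `ℝ^p`, realized by pushing forward
i.i.d. standard Gaussians through the positive-semidefinite square root of `S`. -/
def iidGaussian (n p : ℕ) (S : Matrix (Fin p) (Fin p) ℝ) : Measure (Fin n → Fin p → ℝ) :=
  if hS : S.PosSemidef then
    (Measure.pi fun _ : Fin n => Measure.pi fun _ : Fin p =>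
        ProbabilityTheory.gaussianReal 0 1).map
      (fun Z => fun i => (psdSqrt hS).mulVec (Z i))
  else 0

/-- Sample covariance matrix of samples `X 1, …, X n`. -/
def sampleCov {p n : ℕ} (X : Fin n → Fin p → ℝ) : Matrix (Fin p) (Fin p) ℝ :=
  (n : ℝ)⁻¹ • ∑ i, Matrix.vecMulVec (X i) (X i)

/-! ### Optimization programs -/

/-- Nuclear norm `‖M‖_*` (sum of singular values). -/
def nuclearNorm (M : Matrix (Fin p) (Fin p) ℝ) : ℝ :=
  (psdSqrt (Matrix.posSemidef_conjTranspose_mul_self M)).trace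

/-- Objective of the program (sdp1): `tr((S−L)Σ) − log det(S−L) + λ(γ‖S‖₁ + tr(L))`. -/
def objSDP1 (Sig : Matrix (Fin p) (Fin p) ℝ) (lam gam : ℝ)
    (S L : Matrix (Fin p) (Fin p) ℝ) : ℝ :=
  ((S - L) * Sig).trace - Real.log (S - L).det + lam * (gam * l1Norm S + L.trace)

/-- Feasibility for (sdp1): symmetric `S, L`, `S − L ≻ 0`, `L ⪰ 0`. -/
def FeasSDP1 (S L : Matrix (Fin p) (Fin p) ℝ) : Prop :=
  S.IsHermitian ∧ L.IsHermitian ∧ (S - L).PosDef ∧ L.PosSemidef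

/-- `(S,L)` is an optimum of the program (sdp1). -/
def IsOptSDP1 (Sig : Matrix (Fin p) (Fin p) ℝ) (lam gam : ℝ)
    (S L : Matrix (Fin p) (Fin p) ℝ) : Prop :=
  FeasSDP1 S L ∧ ∀ S' L', FeasSDP1 S' L' →
    objSDP1 Sig lam gam S L ≤ objSDP1 Sig lam gam S' L'

/-- Objective with the nuclear norm: `tr((S−L)Σ) − log det(S−L) + λ(γ‖S‖₁ + ‖L‖_*)`. -/
def objNuc (Sig : Matrix (Fin p) (Fin p) ℝ) (lam gam : ℝ)
    (S L : Matrix (Fin p) (Fin p) ℝ) : ℝ :=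
  ((S - L) * Sig).trace - Real.log (S - L).det + lam * (gam * l1Norm S + nuclearNorm L)

/-- Feasibility for the tangent-space constrained program: symmetric, `S ∈ Ω(Sst)`,
`L ∈ T(M')`, `S − L ≻ 0`. -/
def FeasTS (Sst M' : Matrix (Fin p) (Fin p) ℝ) (S L : Matrix (Fin p) (Fin p) ℝ) : Prop :=
  S.IsHermitian ∧ S ∈ OmegaSet Sst ∧ L ∈ TsetSym M' ∧ (S - L).PosDef

/-- Optimality for the tangent-space constrained program. -/
def IsOptTS (Sst M' Sig : Matrix (Fin p) (Fin p) ℝ) (lam gam : ℝ)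
    (S L : Matrix (Fin p) (Fin p) ℝ) : Prop :=
  FeasTS Sst M' S L ∧ ∀ S' L', FeasTS Sst M' S' L' →
    objNuc Sig lam gam S L ≤ objNuc Sig lam gam S' L'

/-- Feasibility for the unconstrained nuclear-norm program: symmetric, `S − L ≻ 0`. -/
def FeasSy (S L : Matrix (Fin p) (Fin p) ℝ) : Prop :=
  S.IsHermitian ∧ L.IsHermitian ∧ (S - L).PosDef

/-- Optimality for the unconstrained nuclear-norm program. -/
def IsOptSy (Sig : Matrix (Fin p) (Fin p) ℝ) (lam gam : ℝ)
    (S L : Matrix (Fin p) (Fin p) ℝ) : Prop :=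
  FeasSy S L ∧ ∀ S' L', FeasSy S' L' →
    objNuc Sig lam gam S L ≤ objNuc Sig lam gam S' L'

/-! ### Spectral projectors and inertia -/

/-- Orthogonal projection onto the direct sum of the eigenspaces of a symmetric matrix `A`
corresponding to eigenvalues of magnitude less than `η`. -/
def spectralProjLT (A : Matrix (Fin p) (Fin p) ℝ) (η : ℝ) : Matrix (Fin p) (Fin p) ℝ :=
  if hA : A.IsHermitian then
    ∑ i ∈ Finset.univ.filter (fun i => |hA.eigenvalues i| < η),
      Matrix.vecMulVec (fun j => hA.eigenvectorBasis i j) (fun j => hA.eigenvectorBasis i j)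
  else 0

/-- `t` is an eigenvalue of `A`. -/
def hasEigval (A : Matrix (Fin p) (Fin p) ℝ) (t : ℝ) : Prop :=
  ∃ v : Fin p → ℝ, v ≠ 0 ∧ A.mulVec v = t • v

/-- Inertia (numbers of positive, negative, and zero eigenvalues) of a symmetric matrix. -/
def inertia (M : Matrix (Fin p) (Fin p) ℝ) : ℕ × ℕ × ℕ :=
  if hM : M.IsHermitian then
    ((Finset.univ.filter fun i => 0 < hM.eigenvalues i).card,
     (Finset.univ.filter fun i => hM.eigenvalues i < 0).card,
     (Finset.univ.filter fun i => hM.eigenvalues i = 0).card)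
  else (0, 0, 0)

end LVGGM

/-! ### Auxiliary lemmas for statement 2 -/

namespace Stmt2Aux

open LVGGM Matrix

variable {p : ℕ}

lemma tel_toMatrix (f : EuclideanSpace ℝ (Fin p) →ₗ[ℝ] EuclideanSpace ℝ (Fin p)) :
    Matrix.toEuclideanLin (LinearMap.toMatrix (EuclideanSpace.basisFun (Fin p) ℝ).toBasis
      (EuclideanSpace.basisFun (Fin p) ℝ).toBasis f) = f := by
  rw [Matrix.toEuclideanLin_eq_toLin_orthonormal, Matrix.toLin_toMatrix]

lemma tel_mul (A B : Matrix (Fin p) (Fin p) ℝ) :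
    Matrix.toEuclideanLin (A * B) =
      (Matrix.toEuclideanLin A).comp (Matrix.toEuclideanLin B) := by
  rw [Matrix.toEuclideanLin_eq_toLin_orthonormal,
    Matrix.toLin_mul _ (EuclideanSpace.basisFun (Fin p) ℝ).toBasis]

lemma cp_lin (M : Matrix (Fin p) (Fin p) ℝ) :
    Matrix.toEuclideanLin (colProj M) =
    ((LinearMap.range (Matrix.toEuclideanLin M)).subtype ∘ₗ
        ((LinearMap.range (Matrix.toEuclideanLin M)).orthogonalProjectionOnto).toLinearMap) :=
  tel_toMatrix _

lemma cp_herm (M : Matrix (Fin p) (Fin p) ℝ) : (colProj M).IsHermitian := by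
  rw [Matrix.isHermitian_iff_isSymmetric, cp_lin]
  exact Submodule.starProjection_isSymmetric (𝕜 := ℝ) (LinearMap.range (Matrix.toEuclideanLin M))

lemma cp_sym (M : Matrix (Fin p) (Fin p) ℝ) (i j : Fin p) : colProj M i j = colProj M j i := by
  have := (cp_herm M).apply i j
  simpa using this.symm

lemma cp_transpose (M : Matrix (Fin p) (Fin p) ℝ) : (colProj M)ᵀ = colProj M := by
  ext i j; exact cp_sym M j i

lemma cp_idem (M : Matrix (Fin p) (Fin p) ℝ) : colProj M * colProj M = colProj M := by
  apply (Matrix.toEuclideanLin (𝕜 := ℝ) (m := Fin p) (n := Fin p)).injective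
  rw [tel_mul, cp_lin]
  ext x
  simp [Submodule.orthogonalProjectionOnto_mem_subspace_eq_self]
  rw [Submodule.starProjection_eq_self_iff.mpr (by simp)]

/-- Euclidean-space vector from a plain vector. -/
def vecE (v : Fin p → ℝ) : EuclideanSpace ℝ (Fin p) :=
  (WithLp.equiv 2 (Fin p → ℝ)).symm v

lemma norm_vecE (v : Fin p → ℝ) : ‖vecE v‖ = Real.sqrt (∑ j, v j ^ 2) := by
  rw [vecE, EuclideanSpace.norm_eq]; simp [sq_abs]

lemma norm_vecE_single (j : Fin p) : ‖vecE (Pi.single j (1:ℝ))‖ = 1 := by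
  have : vecE (Pi.single j (1:ℝ)) = EuclideanSpace.single j (1:ℝ) := rfl
  rw [this, EuclideanSpace.norm_single]; norm_num

lemma abs_dot_le (x y : Fin p → ℝ) :
    |∑ j, x j * y j| ≤ ‖vecE x‖ * ‖vecE y‖ := by
  have h : (inner ℝ (vecE x) (vecE y) : ℝ) = ∑ j, x j * y j := by
    rw [vecE, vecE, PiLp.inner_apply]; simp [mul_comm]
  rw [← h]
  exact abs_real_inner_le_norm _ _

lemma mulVec_norm_le (A : Matrix (Fin p) (Fin p) ℝ) (v : Fin p → ℝ) :
    ‖vecE (A *ᵥ v)‖ ≤ specNorm A * ‖vecE v‖ := by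
  have h : Matrix.toEuclideanCLM (𝕜 := ℝ) A (vecE v) = vecE (A *ᵥ v) :=
    Matrix.toEuclideanCLM_toLp A v
  rw [← h]
  exact (Matrix.toEuclideanCLM (𝕜 := ℝ) A).le_opNorm _

set_option maxHeartbeats 1000000 in
set_option synthInstance.maxHeartbeats 200000 in
lemma specNorm_le (A : Matrix (Fin p) (Fin p) ℝ) (c : ℝ) (hc : 0 ≤ c)
    (h : ∀ v, ‖vecE (A *ᵥ v)‖ ≤ c * ‖vecE v‖) : specNorm A ≤ c := by
  apply ContinuousLinearMap.opNorm_le_bound _ hc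
  intro x
  have hx : x = vecE (WithLp.equiv 2 (Fin p → ℝ) x) := rfl
  rw [hx]
  simp only [vecE]
  rw [WithLp.equiv_symm_apply, Matrix.toEuclideanCLM_toLp]
  exact h _

lemma specNorm_nonneg (A : Matrix (Fin p) (Fin p) ℝ) : 0 ≤ specNorm A := norm_nonneg _

lemma specNorm_zero : specNorm (0 : Matrix (Fin p) (Fin p) ℝ) = 0 := by
  rw [specNorm, map_zero, norm_zero]

set_option synthInstance.maxHeartbeats 1000000 in
set_option maxHeartbeats 1000000 in
lemma specNorm_transpose (A : Matrix (Fin p) (Fin p) ℝ) : specNorm Aᵀ = specNorm A := by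
  have h : Aᵀ = star A := by
    ext i j; simp [Matrix.star_apply]
  have h2 : Matrix.toEuclideanCLM (𝕜 := ℝ) (star A) = star (Matrix.toEuclideanCLM (𝕜 := ℝ) A) :=
    map_star _ _
  rw [specNorm, specNorm, h, h2]
  exact ContinuousLinearMap.adjoint.norm_map _

lemma abs_apply_le_norm_vecE (v : Fin p → ℝ) (i : Fin p) : |v i| ≤ ‖vecE v‖ := by
  rw [norm_vecE, ← Real.sqrt_sq_eq_abs]
  exact Real.sqrt_le_sqrt (Finset.single_le_sum (f := fun j => v j ^ 2)
    (fun j _ => sq_nonneg _) (Finset.mem_univ i))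

lemma abs_entry_le_specNorm (N : Matrix (Fin p) (Fin p) ℝ) (i j : Fin p) :
    |N i j| ≤ specNorm N := by
  have h := abs_apply_le_norm_vecE (N *ᵥ Pi.single j 1) i
  have h2 := mulVec_norm_le N (Pi.single j 1)
  rw [norm_vecE_single, mul_one] at h2
  have h3 : (N *ᵥ Pi.single j 1) i = N i j := by simp
  rw [h3] at h; exact h.trans h2

lemma maxNorm_le (N : Matrix (Fin p) (Fin p) ℝ) (c : ℝ) (hc : 0 ≤ c)
    (h : ∀ i j, |N i j| ≤ c) : maxNorm N ≤ c :=
  Real.iSup_le (fun i => Real.iSup_le (fun j => h i j) hc) hc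

lemma abs_le_maxNorm (N : Matrix (Fin p) (Fin p) ℝ) (i j : Fin p) :
    |N i j| ≤ maxNorm N := by
  have h1 : |N i j| ≤ ⨆ j, |N i j| :=
    le_ciSup (f := fun j => |N i j|) (Set.Finite.bddAbove (Set.finite_range _)) j
  have h2 : (⨆ j, |N i j|) ≤ maxNorm N :=
    le_ciSup (f := fun i => ⨆ j, |N i j|) (Set.Finite.bddAbove (Set.finite_range _)) i
  exact h1.trans h2

lemma maxNorm_nonneg [Nonempty (Fin p)] (N : Matrix (Fin p) (Fin p) ℝ) :
    0 ≤ maxNorm N :=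
  le_trans (abs_nonneg _) (abs_le_maxNorm N (Classical.arbitrary _) (Classical.arbitrary _))

lemma maxNorm_zero [Nonempty (Fin p)] : maxNorm (0 : Matrix (Fin p) (Fin p) ℝ) = 0 := by
  simp [maxNorm, ciSup_const]

lemma colEucNorm_eq (A : Matrix (Fin p) (Fin p) ℝ) (i : Fin p) :
    colEucNorm A i = ‖vecE (fun k => A k i)‖ := by
  rw [norm_vecE, colEucNorm]

lemma colEucNorm_nonneg (A : Matrix (Fin p) (Fin p) ℝ) (i : Fin p) :
    0 ≤ colEucNorm A i := Real.sqrt_nonneg _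

/-- Diagonal of a symmetric idempotent equals sum of squares of a column. -/
lemma diag_symm_idem (A : Matrix (Fin p) (Fin p) ℝ) (hsym : ∀ k l, A k l = A l k)
    (hidem : A * A = A) (i : Fin p) : ∑ k, (A k i) ^ 2 = A i i := by
  have h : (A * A) i i = ∑ k, A i k * A k i := Matrix.mul_apply
  rw [hidem] at h
  rw [h]
  exact Finset.sum_congr rfl fun k _ => by rw [sq, hsym k i]

lemma zero_mem_TsetGen (M : Matrix (Fin p) (Fin p) ℝ) : (0 : Matrix (Fin p) (Fin p) ℝ) ∈ TsetGen M := by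
  show projTgenPerp M 0 = 0
  rw [projTgenPerp]
  simp

lemma xiGen_bddAbove (M : Matrix (Fin p) (Fin p) ℝ) :
    BddAbove (Set.range fun N : {N : Matrix (Fin p) (Fin p) ℝ // N ∈ TsetGen M ∧ specNorm N ≤ 1} =>
      maxNorm N.1) := by
  refine ⟨1, ?_⟩
  rintro y ⟨⟨N, hmem, hs⟩, rfl⟩
  exact maxNorm_le N 1 zero_le_one fun i j => (abs_entry_le_specNorm N i j).trans hs

lemma xiGen_nonneg [Nonempty (Fin p)] (M : Matrix (Fin p) (Fin p) ℝ) : 0 ≤ xiGen M := by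
  have h := le_ciSup (xiGen_bddAbove M) ⟨0, zero_mem_TsetGen M, by rw [specNorm_zero]; norm_num⟩
  rw [maxNorm_zero] at h
  exact h

lemma mul_vecMulVec (A : Matrix (Fin p) (Fin p) ℝ) (u v : Fin p → ℝ) :
    A * Matrix.vecMulVec u v = Matrix.vecMulVec (A *ᵥ u) v := by
  ext k l
  rw [Matrix.mul_apply, Matrix.vecMulVec_apply, Matrix.mulVec, dotProduct,
    Finset.sum_mul]
  exact Finset.sum_congr rfl fun m _ => by rw [Matrix.vecMulVec_apply]; ring

lemma vecMulVec_mulVec' (u v w : Fin p → ℝ) :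
    Matrix.vecMulVec u v *ᵥ w = (∑ l, v l * w l) • u := by
  ext k
  rw [Matrix.mulVec, dotProduct]
  simp only [Matrix.vecMulVec_apply, Pi.smul_apply, smul_eq_mul, Finset.mul_sum]
  rw [Finset.sum_mul]
  exact Finset.sum_congr rfl fun l _ => by ring

/-- Core lower bound: each column norm of the projector is at most `xiGen`. -/
lemma lower (M : Matrix (Fin p) (Fin p) ℝ) [Nonempty (Fin p)] (i : Fin p) :
    colEucNorm (colProj M) i ≤ xiGen M := by
  obtain ⟨c, hc⟩ : ∃ c, c = colEucNorm (colProj M) i := ⟨_, rfl⟩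
  rw [← hc]
  rcases eq_or_lt_of_le (colEucNorm_nonneg (colProj M) i) with h0 | hcpos
  · rw [hc, ← h0]
    exact xiGen_nonneg M
  · have hcpos' : 0 < c := hc ▸ hcpos
    set u : Fin p → ℝ := fun k => colProj M k i with hu
    set v : Fin p → ℝ := Pi.single i 1 with hv
    set N : Matrix (Fin p) (Fin p) ℝ := c⁻¹ • Matrix.vecMulVec u v with hN
    have hPu : colProj M *ᵥ u = u := by
      have h1 : u = colProj M *ᵥ v := by
        funext k; simp [hu, hv, Matrix.mulVec_single]
      rw [h1, Matrix.mulVec_mulVec, cp_idem]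
    have hsum : ∑ k, u k ^ 2 = colProj M i i :=
      diag_symm_idem (colProj M) (cp_sym M) (cp_idem M) i
    have hc2 : c ^ 2 = colProj M i i := by
      rw [hc, colEucNorm, Real.sq_sqrt]
      · exact hsum
      · exact Finset.sum_nonneg fun k _ => sq_nonneg _
    have hnormu : ‖vecE u‖ = c := by
      rw [norm_vecE, hsum, ← hc2, Real.sqrt_sq hcpos'.le]
    have hmem : N ∈ TsetGen M := by
      show projTgenPerp M N = 0
      rw [projTgenPerp, hN, Matrix.mul_smul, Matrix.smul_mul, mul_vecMulVec]
      have h2 : (1 - colProj M) *ᵥ u = 0 := by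
        rw [Matrix.sub_mulVec, hPu, Matrix.one_mulVec, sub_self]
      rw [h2]
      have h3 : Matrix.vecMulVec (0 : Fin p → ℝ) v = 0 := by
        ext k l; simp [Matrix.vecMulVec_apply]
      rw [h3, Matrix.zero_mul, smul_zero]
    have hspec : specNorm N ≤ 1 := by
      apply specNorm_le N 1 zero_le_one
      intro w
      rw [one_mul]
      have h1 : N *ᵥ w = (c⁻¹ * ∑ l, v l * w l) • u := by
        rw [hN, Matrix.smul_mulVec, vecMulVec_mulVec', smul_smul]
      rw [h1]
      have h2 : vecE ((c⁻¹ * ∑ l, v l * w l) • u) = (c⁻¹ * ∑ l, v l * w l) • vecE u := rfl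
      rw [h2, norm_smul, hnormu]
      have h3 : |∑ l, v l * w l| ≤ ‖vecE w‖ := by
        have h5 := abs_dot_le v w
        rw [hv] at h5
        rw [hv]
        rwa [norm_vecE_single, one_mul] at h5
      have h4 : ‖c⁻¹ * ∑ l, v l * w l‖ ≤ c⁻¹ * ‖vecE w‖ := by
        rw [Real.norm_eq_abs, abs_mul, abs_of_nonneg (inv_nonneg.mpr hcpos'.le)]
        exact mul_le_mul_of_nonneg_left h3 (inv_nonneg.mpr hcpos'.le)
      calc ‖c⁻¹ * ∑ l, v l * w l‖ * c ≤ (c⁻¹ * ‖vecE w‖) * c :=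
            mul_le_mul_of_nonneg_right h4 hcpos'.le
        _ = ‖vecE w‖ := by field_simp
    have hNii : N i i = c := by
      rw [hN]
      show c⁻¹ * (Matrix.vecMulVec u v i i) = c
      rw [Matrix.vecMulVec_apply, hv]
      simp only [Pi.single_eq_same, mul_one]
      show c⁻¹ * colProj M i i = c
      rw [← hc2, sq]
      field_simp
    have h5 : |c| ≤ maxNorm N := by
      rw [← hNii]
      exact abs_le_maxNorm N i i
    have hfinal : c ≤ maxNorm N := (le_abs_self c).trans h5
    exact hfinal.trans (le_ciSup (xiGen_bddAbove M) ⟨N, hmem, hspec⟩)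

lemma Tset_transpose (M N : Matrix (Fin p) (Fin p) ℝ) (h : N ∈ TsetGen Mᵀ) :
    Nᵀ ∈ TsetGen M := by
  have h0 : (1 - colProj Mᵀ) * N * (1 - colProj Mᵀᵀ) = 0 := h
  show (1 - colProj M) * Nᵀ * (1 - colProj Mᵀ) = 0
  have := congrArg Matrix.transpose h0
  rw [Matrix.transpose_mul, Matrix.transpose_mul, Matrix.transpose_sub,
    Matrix.transpose_sub, Matrix.transpose_one, cp_transpose, cp_transpose,
    Matrix.transpose_zero, Matrix.transpose_transpose] at this
  rw [← Matrix.mul_assoc] at this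
  exact this

lemma xiGen_transpose_le (M : Matrix (Fin p) (Fin p) ℝ) [Nonempty (Fin p)] :
    xiGen Mᵀ ≤ xiGen M := by
  apply Real.iSup_le _ (xiGen_nonneg M)
  rintro ⟨N, hmem, hs⟩
  have hmem' : Nᵀ ∈ TsetGen M := Tset_transpose M N hmem
  have hs' : specNorm Nᵀ ≤ 1 := by rw [specNorm_transpose]; exact hs
  have h1 : maxNorm N ≤ maxNorm Nᵀ :=
    maxNorm_le _ _ (maxNorm_nonneg _) fun i j => abs_le_maxNorm Nᵀ j i
  exact h1.trans (le_ciSup (xiGen_bddAbove M) ⟨Nᵀ, hmem', hs'⟩)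

/-- Core upper bound per entry. -/
lemma entry_bound (M N : Matrix (Fin p) (Fin p) ℝ) (hN : N ∈ TsetGen M)
    (hs : specNorm N ≤ 1) (i j : Fin p) :
    |N i j| ≤ colEucNorm (colProj M) i + colEucNorm (colProj Mᵀ) j := by
  have h0 : (1 - colProj M) * N * (1 - colProj Mᵀ) = 0 := hN
  have hdec : N = colProj M * N + (1 - colProj M) * N * colProj Mᵀ := by
    have h1 : colProj M * N + ((1 - colProj M) * N * (1 - colProj Mᵀ)
        + (1 - colProj M) * N * colProj Mᵀ) = N := by noncomm_ring
    rw [h0, zero_add] at h1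
    exact h1.symm
  have hNij : N i j = (colProj M * N) i j + ((1 - colProj M) * N * colProj Mᵀ) i j := by
    conv_lhs => rw [hdec]
    rw [Matrix.add_apply]
  -- first term
  have ht1 : |(colProj M * N) i j| ≤ colEucNorm (colProj M) i := by
    have he : (colProj M * N) i j = ∑ k, colProj M k i * (N *ᵥ Pi.single j 1) k := by
      rw [Matrix.mul_apply]
      refine Finset.sum_congr rfl fun k _ => ?_
      rw [cp_sym M i k]
      congr 1
      simp [Matrix.mulVec_single]
    rw [he]
    calc |∑ k, colProj M k i * (N *ᵥ Pi.single j 1) k|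
        ≤ ‖vecE (fun k => colProj M k i)‖ * ‖vecE (N *ᵥ Pi.single j 1)‖ := abs_dot_le _ _
      _ ≤ ‖vecE (fun k => colProj M k i)‖ * 1 := by
          apply mul_le_mul_of_nonneg_left _ (norm_nonneg _)
          have h2 := mulVec_norm_le N (Pi.single j 1)
          rw [norm_vecE_single, mul_one] at h2
          exact h2.trans hs
      _ = colEucNorm (colProj M) i := by rw [mul_one, colEucNorm_eq]
  -- second term
  have hRsym : ∀ k l, (1 - colProj M) k l = (1 - colProj M) l k := by
    intro k l
    rw [Matrix.sub_apply, Matrix.sub_apply, cp_sym M k l, Matrix.one_apply, Matrix.one_apply]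
    by_cases h : k = l
    · subst h; rfl
    · rw [if_neg h, if_neg (Ne.symm h)]
  have hRidem : (1 - colProj M) * (1 - colProj M) = 1 - colProj M := by
    have h1 : (1 - colProj M) * (1 - colProj M)
        = 1 - colProj M - colProj M + colProj M * colProj M := by noncomm_ring
    rw [cp_idem] at h1
    rw [h1]; noncomm_ring
  have hPdiag : 0 ≤ colProj M i i := by
    rw [← diag_symm_idem (colProj M) (cp_sym M) (cp_idem M) i]
    exact Finset.sum_nonneg fun k _ => sq_nonneg _
  have hRcol : ‖vecE (fun k => (1 - colProj M) k i)‖ ≤ 1 := by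
    rw [norm_vecE]
    have h1 : ∑ k, ((1 - colProj M) k i) ^ 2 = (1 - colProj M) i i :=
      diag_symm_idem _ hRsym hRidem i
    rw [h1]
    have h2 : (1 - colProj M) i i ≤ 1 := by
      rw [Matrix.sub_apply, Matrix.one_apply_eq]
      linarith
    calc Real.sqrt ((1 - colProj M) i i) ≤ Real.sqrt 1 := Real.sqrt_le_sqrt h2
      _ = 1 := Real.sqrt_one
  have ht2 : |((1 - colProj M) * N * colProj Mᵀ) i j| ≤ colEucNorm (colProj Mᵀ) j := by
    have he : ((1 - colProj M) * N * colProj Mᵀ) i j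
        = ∑ k, (1 - colProj M) k i * (N *ᵥ (fun m => colProj Mᵀ m j)) k := by
      rw [Matrix.mul_assoc, Matrix.mul_apply]
      refine Finset.sum_congr rfl fun k _ => ?_
      rw [hRsym i k]
      rfl
    rw [he]
    calc |∑ k, (1 - colProj M) k i * (N *ᵥ (fun m => colProj Mᵀ m j)) k|
        ≤ ‖vecE (fun k => (1 - colProj M) k i)‖ * ‖vecE (N *ᵥ (fun m => colProj Mᵀ m j))‖ :=
          abs_dot_le _ _
      _ ≤ 1 * ‖vecE (N *ᵥ (fun m => colProj Mᵀ m j))‖ :=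
          mul_le_mul_of_nonneg_right hRcol (norm_nonneg _)
      _ = ‖vecE (N *ᵥ (fun m => colProj Mᵀ m j))‖ := one_mul _
      _ ≤ specNorm N * ‖vecE (fun m => colProj Mᵀ m j)‖ := mulVec_norm_le _ _
      _ ≤ 1 * ‖vecE (fun m => colProj Mᵀ m j)‖ :=
          mul_le_mul_of_nonneg_right hs (norm_nonneg _)
      _ = colEucNorm (colProj Mᵀ) j := by rw [one_mul, colEucNorm_eq]
  calc |N i j| ≤ |(colProj M * N) i j| + |((1 - colProj M) * N * colProj Mᵀ) i j| := by
        rw [hNij]; exact abs_add_le _ _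
    _ ≤ colEucNorm (colProj M) i + colEucNorm (colProj Mᵀ) j := add_le_add ht1 ht2

end Stmt2Aux

/-- for any nonzero `M`, `inc(M) ≤ ξ(T(M)) ≤ 2 inc(M)`. -/
theorem statement_2 {p : ℕ} (M : Matrix (Fin p) (Fin p) ℝ) (hM : M ≠ 0) :
    LVGGM.inc M ≤ LVGGM.xiGen M ∧ LVGGM.xiGen M ≤ 2 * LVGGM.inc M := by
  have hne : Nonempty (Fin p) := by
    by_contra h
    exact hM (by ext i j; exact absurd ⟨i⟩ h)
  have hinc0 : 0 ≤ LVGGM.inc M := by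
    refine le_trans ?_ (le_max_left _ _)
    exact Real.iSup_nonneg fun i => Stmt2Aux.colEucNorm_nonneg _ i
  constructor
  · apply max_le
    · exact Real.iSup_le (fun i => Stmt2Aux.lower M i) (Stmt2Aux.xiGen_nonneg M)
    · exact Real.iSup_le
        (fun i => (Stmt2Aux.lower Mᵀ i).trans (Stmt2Aux.xiGen_transpose_le M))
        (Stmt2Aux.xiGen_nonneg M)
  · apply Real.iSup_le _ (by linarith)
    rintro ⟨N, hmem, hs⟩
    apply Stmt2Aux.maxNorm_le _ _ (by linarith)
    intro i j
    have h1 := Stmt2Aux.entry_bound M N hmem hs i j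
    have h2 : LVGGM.colEucNorm (LVGGM.colProj M) i ≤ LVGGM.inc M :=
      le_trans (le_ciSup (Set.Finite.bddAbove (Set.finite_range _)) i) (le_max_left _ _)
    have h3 : LVGGM.colEucNorm (LVGGM.colProj Mᵀ) j ≤ LVGGM.inc M :=
      le_trans (le_ciSup (Set.Finite.bddAbove (Set.finite_range _)) j) (le_max_right _ _)
    linarith
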